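/- Let X be a Banach space with decomposition X = X₁ ⊕ X₂ induced by an idempotent P, and let T be a bounded operator commuting with P, T = T₁ ⊕ T₂. If T₁ is a Riesz operator and T₂ is an upper semi-Fredholm operator admitting a left inverse modulo finite rank operators, then T + P admits a left inverse modulo finite rank operators on X: there exist S and finite rank F with S(T + P) = I + F. -/

import Mathlib

open ContinuousLinearMap

/-- A bounded operator is Fredholm if its kernel is finite dimensional and its range
is closed of finite codimension. -/
def IsFredholm {E : Type*} [NormedAddCommGroup E] [NormedSpace ℂ E] (T : E →L[ℂ] E) : Prop :=
  FiniteDimensional ℂ (LinearMap.ker (T : E →ₗ[ℂ] E)) ∧ IsClosed (LinearMap.range (T : E →ₗ[ℂ] E) : Set E) ∧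
    FiniteDimensional ℂ (E ⧸ LinearMap.range (T : E →ₗ[ℂ] E))

/-- The Fredholm index `dim N(T) - codim R(T)`. -/
noncomputable def fredInd {E : Type*} [NormedAddCommGroup E] [NormedSpace ℂ E]
    (T : E →L[ℂ] E) : ℤ :=
  (Module.finrank ℂ (LinearMap.ker (T : E →ₗ[ℂ] E)) : ℤ) - (Module.finrank ℂ (E ⧸ LinearMap.range (T : E →ₗ[ℂ] E)) : ℤ)

/-- A Riesz operator: `T - λ•I` is Fredholm for every nonzero scalar `λ`. -/
def IsRiesz {E : Type*} [NormedAddCommGroup E] [NormedSpace ℂ E] (T : E →L[ℂ] E) : Prop :=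
  ∀ c : ℂ, c ≠ 0 → _root_.IsFredholm (T - c • (1 : E →L[ℂ] E))

/-- Restriction of an operator to an invariant subspace. -/
def restrictCLM {E : Type*} [NormedAddCommGroup E] [NormedSpace ℂ E] (T : E →L[ℂ] E)
    (M : Submodule ℂ E) (h : ∀ x : M, T ↑x ∈ M) : M →L[ℂ] M :=
  (T.comp M.subtypeL).codRestrict M h

/-- A finite rank operator. -/
def FinRank {E : Type*} [NormedAddCommGroup E] [NormedSpace ℂ E] (F : E →L[ℂ] E) : Prop :=
  FiniteDimensional ℂ (LinearMap.range (F : E →ₗ[ℂ] E))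

/-- An operator commuting with `P` leaves the range of `P` invariant. -/
lemma rangeInv {E : Type*} [NormedAddCommGroup E] [NormedSpace ℂ E] {P T : E →L[ℂ] E}
    (hc : T ∘L P = P ∘L T) : ∀ x : LinearMap.range (P : E →ₗ[ℂ] E), T ↑x ∈ LinearMap.range (P : E →ₗ[ℂ] E) := by
  rintro ⟨_, y, rfl⟩
  exact ⟨T y, by simpa using (DFunLike.congr_fun hc y).symm⟩

/-- An operator commuting with `P` leaves the kernel of `P` invariant. -/
lemma kerInv {E : Type*} [NormedAddCommGroup E] [NormedSpace ℂ E] {P T : E →L[ℂ] E}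
    (hc : T ∘L P = P ∘L T) : ∀ x : LinearMap.ker (P : E →ₗ[ℂ] E), T ↑x ∈ LinearMap.ker (P : E →ₗ[ℂ] E) := by
  rintro ⟨x, hx⟩
  have h1 : T (P x) = P (T x) := DFunLike.congr_fun hc x
  simp only [LinearMap.mem_ker] at hx ⊢
  simp only [ContinuousLinearMap.coe_coe] at *
  rw [← h1, hx, map_zero]

/-- `P T P` leaves the range of `P` invariant. -/
lemma rangeInvQuad {E : Type*} [NormedAddCommGroup E] [NormedSpace ℂ E] (P T : E →L[ℂ] E) :
    ∀ x : LinearMap.range (P : E →ₗ[ℂ] E), (P ∘L T ∘L P) ↑x ∈ LinearMap.range (P : E →ₗ[ℂ] E) :=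
  fun x => ⟨T (P ↑x), rfl⟩

/-- `(I-P) T (I-P)` leaves the kernel of `P` invariant when `P` is idempotent. -/
lemma kerInvQuad {E : Type*} [NormedAddCommGroup E] [NormedSpace ℂ E] {P : E →L[ℂ] E}
    (hP : P ∘L P = P) (T : E →L[ℂ] E) :
    ∀ x : LinearMap.ker (P : E →ₗ[ℂ] E), (((1 : E →L[ℂ] E) - P) ∘L T ∘L ((1 : E →L[ℂ] E) - P)) ↑x ∈
      LinearMap.ker (P : E →ₗ[ℂ] E) := by
  intro x
  have h : ∀ z, P (((1 : E →L[ℂ] E) - P) z) = 0 := by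
    intro z
    have h2 : P (P z) = P z := DFunLike.congr_fun hP z
    simp [ContinuousLinearMap.sub_apply, h2]
  exact LinearMap.mem_ker.mpr (h _)

lemma key {E : Type*} [NormedAddCommGroup E] [NormedSpace ℂ E] [CompleteSpace E]
    (A : E →L[ℂ] E) (hker : FiniteDimensional ℂ (LinearMap.ker (A : E →ₗ[ℂ] E)))
    (hcl : IsClosed (LinearMap.range (A : E →ₗ[ℂ] E) : Set E))
    (hcod : FiniteDimensional ℂ (E ⧸ LinearMap.range (A : E →ₗ[ℂ] E))) :
    ∃ S F : E →L[ℂ] E, FinRank F ∧ S ∘L A = 1 + F := by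
  obtain ⟨f, hf⟩ := Submodule.ClosedComplemented.of_finiteDimensional (LinearMap.ker (A : E →ₗ[ℂ] E))
  obtain ⟨ρ, hρ⟩ := Submodule.ClosedComplemented.of_quotient_finiteDimensional hcl
  haveI : CompleteSpace (LinearMap.ker (f : E →ₗ[ℂ] LinearMap.ker (A : E →ₗ[ℂ] E))) := (ContinuousLinearMap.isClosed_ker f).completeSpace_coe
  haveI : CompleteSpace (LinearMap.range (A : E →ₗ[ℂ] E)) := hcl.completeSpace_coe
  have hAf : ∀ x : E, A ((f x : E)) = 0 := fun x => (f x).2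
  have hQmem : ∀ x : E, x - (f x : E) ∈ LinearMap.ker (f : E →ₗ[ℂ] LinearMap.ker (A : E →ₗ[ℂ] E)) := by
    intro x
    have : f (x - (f x : E)) = f x - f ((f x : E)) := map_sub f _ _
    simp [LinearMap.mem_ker, this, hf (f x)]
  have hmem : ∀ x : LinearMap.ker (f : E →ₗ[ℂ] LinearMap.ker (A : E →ₗ[ℂ] E)), A (x : E) ∈ LinearMap.range (A : E →ₗ[ℂ] E) := fun x => ⟨x, rfl⟩
  set Aq : LinearMap.ker (f : E →ₗ[ℂ] LinearMap.ker (A : E →ₗ[ℂ] E)) →L[ℂ] LinearMap.range (A : E →ₗ[ℂ] E) :=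
    (A.comp (LinearMap.ker (f : E →ₗ[ℂ] LinearMap.ker (A : E →ₗ[ℂ] E))).subtypeL).codRestrict _ hmem with hAq
  have hAq_apply : ∀ x : LinearMap.ker (f : E →ₗ[ℂ] LinearMap.ker (A : E →ₗ[ℂ] E)), ((Aq x : E)) = A (x : E) := fun x => rfl
  have hinj : Aq.ker = ⊥ := by
    rw [LinearMap.ker_eq_bot']
    intro m hm
    have h1 : A (m : E) = 0 := congrArg Subtype.val hm
    have h2 : (m : E) ∈ LinearMap.ker (A : E →ₗ[ℂ] E) := h1
    have h3 : ((⟨(m : E), h2⟩ : LinearMap.ker (A : E →ₗ[ℂ] E)) : E) = ((f (m : E) : LinearMap.ker (A : E →ₗ[ℂ] E)) : E) :=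
      congrArg Subtype.val (hf ⟨m, h2⟩).symm
    have h4 : f (m : E) = 0 := m.2
    ext
    show (m : E) = 0
    rw [show (m : E) = ((⟨(m : E), h2⟩ : LinearMap.ker (A : E →ₗ[ℂ] E)) : E) from rfl, h3, h4]
    rfl
  have hsurj : Aq.range = ⊤ := by
    rw [LinearMap.range_eq_top]
    rintro ⟨y, x, rfl⟩
    refine ⟨⟨x - (f x : E), hQmem x⟩, ?_⟩
    ext
    simp [hAq_apply, map_sub, hAf]
  set e := ContinuousLinearEquiv.ofBijective Aq hinj hsurj with he
  refine ⟨(LinearMap.ker (f : E →ₗ[ℂ] LinearMap.ker (A : E →ₗ[ℂ] E))).subtypeL ∘L (e.symm : LinearMap.range (A : E →ₗ[ℂ] E) →L[ℂ] LinearMap.ker (f : E →ₗ[ℂ] LinearMap.ker (A : E →ₗ[ℂ] E))) ∘L ρ,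
    -((LinearMap.ker (A : E →ₗ[ℂ] E)).subtypeL ∘L f), ?_, ?_⟩
  · have hle : (-((LinearMap.ker (A : E →ₗ[ℂ] E)).subtypeL ∘L f)).range ≤ LinearMap.ker (A : E →ₗ[ℂ] E) := by
      rintro y ⟨x, rfl⟩
      exact neg_mem (f x).2
    exact Submodule.finiteDimensional_of_le hle
  · ext x
    have hρA : ρ (A x) = ⟨A x, ⟨x, rfl⟩⟩ := hρ ⟨A x, ⟨x, rfl⟩⟩
    have heq : e ⟨x - (f x : E), hQmem x⟩ = ⟨A x, ⟨x, rfl⟩⟩ := by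
      ext
      show (Aq ⟨x - (f x : E), hQmem x⟩ : E) = A x
      simp [hAq_apply, map_sub, hAf]
    have hsymm : e.symm ⟨A x, ⟨x, rfl⟩⟩ = ⟨x - (f x : E), hQmem x⟩ := by
      rw [← heq, ContinuousLinearEquiv.symm_apply_apply]
    simp only [ContinuousLinearMap.comp_apply, ContinuousLinearMap.add_apply,
      ContinuousLinearMap.one_apply, ContinuousLinearMap.neg_apply]
    rw [hρA]
    rw [show ((e.symm : LinearMap.range (A : E →ₗ[ℂ] E) →L[ℂ] LinearMap.ker (f : E →ₗ[ℂ] LinearMap.ker (A : E →ₗ[ℂ] E))) ⟨A x, ⟨x, rfl⟩⟩)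
        = e.symm ⟨A x, ⟨x, rfl⟩⟩ from rfl, hsymm]
    simp [sub_eq_add_neg]


/-- If `P` is an idempotent commuting with `T`, `T₁ = T|_{R(P)}` is Riesz
and `T₂ = T|_{N(P)}` is upper semi-Fredholm with a left inverse modulo finite rank operators,
then `T + P` has a left inverse modulo finite rank operators on `X`. -/
theorem sum_left_invertible_mod_finite_rank
    {X : Type*} [NormedAddCommGroup X] [NormedSpace ℂ X] [CompleteSpace X]
    (P T : X →L[ℂ] X) (hP : P ∘L P = P) (hc : T ∘L P = P ∘L T)
    (h1 : IsRiesz (restrictCLM T (LinearMap.range (P : X →ₗ[ℂ] X)) (rangeInv hc)))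
    (h2ker : FiniteDimensional ℂ
      (LinearMap.ker ((restrictCLM T (LinearMap.ker (P : X →ₗ[ℂ] X)) (kerInv hc) :
        LinearMap.ker (P : X →ₗ[ℂ] X) →ₗ[ℂ] LinearMap.ker (P : X →ₗ[ℂ] X)))))
    (h2cl : IsClosed (LinearMap.range ((restrictCLM T (LinearMap.ker (P : X →ₗ[ℂ] X)) (kerInv hc) :
      LinearMap.ker (P : X →ₗ[ℂ] X) →ₗ[ℂ] LinearMap.ker (P : X →ₗ[ℂ] X))) :
      Set (LinearMap.ker (P : X →ₗ[ℂ] X))))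
    (h2inv : ∃ (S₂ F₂ : LinearMap.ker (P : X →ₗ[ℂ] X) →L[ℂ] LinearMap.ker (P : X →ₗ[ℂ] X)), FinRank F₂ ∧
      S₂ ∘L restrictCLM T (LinearMap.ker (P : X →ₗ[ℂ] X)) (kerInv hc) = 1 + F₂) :
    ∃ (S F : X →L[ℂ] X), FinRank F ∧ S ∘L (T + P) = 1 + F := by
  set X₁ := LinearMap.range (P : X →ₗ[ℂ] X) with hX₁def
  set X₂ := LinearMap.ker (P : X →ₗ[ℂ] X) with hX₂def
  obtain ⟨S₂, F₂, hF₂, hS₂⟩ := h2inv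
  have hPP : ∀ x, P (P x) = P x := fun x => DFunLike.congr_fun hP x
  have hTP : ∀ x, P (T x) = T (P x) := fun x => (DFunLike.congr_fun hc x).symm
  have hmem1 : ∀ x : X, P x ∈ X₁ := fun x => ⟨x, rfl⟩
  have hmem2 : ∀ x : X, ((1 : X →L[ℂ] X) - P) x ∈ X₂ := by
    intro x
    have h0 : P (((1 : X →L[ℂ] X) - P) x) = 0 := by
      simp [ContinuousLinearMap.sub_apply, map_sub, hPP]
    exact LinearMap.mem_ker.mpr h0
  set π₁ : X →L[ℂ] X₁ := P.codRestrict _ hmem1 with hπ₁def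
  set π₂ : X →L[ℂ] X₂ := ((1 : X →L[ℂ] X) - P).codRestrict _ hmem2 with hπ₂def
  have hπ₁c : ∀ x, ((π₁ x : X)) = P x := fun x => rfl
  have hπ₂c : ∀ x, ((π₂ x : X)) = x - P x := fun x => rfl
  -- X₁ is closed, hence complete
  have hX₁closed : IsClosed (X₁ : Set X) := by
    have hset : (X₁ : Set X) = {x | x - P x = 0} := by
      ext x
      simp only [Set.mem_setOf_eq, SetLike.mem_coe]
      constructor
      · rintro ⟨y, rfl⟩
        rw [ContinuousLinearMap.coe_coe, hPP, sub_self]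
      · intro hx
        exact ⟨x, (sub_eq_zero.mp hx).symm⟩
    rw [hset]
    exact isClosed_eq (continuous_id.sub P.continuous) continuous_const
  haveI : CompleteSpace X₁ := hX₁closed.completeSpace_coe
  set T₁ := restrictCLM T X₁ (rangeInv hc) with hT₁def
  set T₂ := restrictCLM T X₂ (kerInv hc) with hT₂def
  have hT₁c : ∀ m : X₁, ((T₁ m : X)) = T (m : X) := fun m => rfl
  have hT₂c : ∀ m : X₂, ((T₂ m : X)) = T (m : X) := fun m => rfl
  -- T₁ + 1 is Fredholm
  have hfred : _root_.IsFredholm (T₁ + 1) := by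
    have := h1 (-1) (by norm_num)
    have heq : T₁ - (-1 : ℂ) • (1 : X₁ →L[ℂ] X₁) = T₁ + 1 := by
      ext m
      simp [sub_eq_add_neg]
    rwa [heq] at this
  obtain ⟨S₁, F₁, hF₁, hS₁⟩ := key (T₁ + 1) hfred.1 hfred.2.1 hfred.2.2
  refine ⟨X₁.subtypeL ∘L S₁ ∘L π₁ + X₂.subtypeL ∘L S₂ ∘L π₂,
    X₁.subtypeL ∘L F₁ ∘L π₁ + X₂.subtypeL ∘L F₂ ∘L π₂, ?_, ?_⟩
  · -- finite rank
    haveI : FiniteDimensional ℂ (LinearMap.range (F₁ : X₁ →ₗ[ℂ] X₁)) := hF₁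
    haveI : FiniteDimensional ℂ (LinearMap.range (F₂ : X₂ →ₗ[ℂ] X₂)) := hF₂
    haveI : FiniteDimensional ℂ ((LinearMap.range (F₁ : X₁ →ₗ[ℂ] X₁)).map X₁.subtype) :=
      Module.Finite.map _ _
    haveI : FiniteDimensional ℂ ((LinearMap.range (F₂ : X₂ →ₗ[ℂ] X₂)).map X₂.subtype) :=
      Module.Finite.map _ _
    have hle : LinearMap.range ((X₁.subtypeL ∘L F₁ ∘L π₁ + X₂.subtypeL ∘L F₂ ∘L π₂ : X →L[ℂ] X) : X →ₗ[ℂ] X) ≤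
        (LinearMap.range (F₁ : X₁ →ₗ[ℂ] X₁)).map X₁.subtype ⊔ (LinearMap.range (F₂ : X₂ →ₗ[ℂ] X₂)).map X₂.subtype := by
      rintro y ⟨x, rfl⟩
      refine Submodule.add_mem_sup ?_ ?_
      · exact ⟨F₁ (π₁ x), ⟨π₁ x, rfl⟩, rfl⟩
      · exact ⟨F₂ (π₂ x), ⟨π₂ x, rfl⟩, rfl⟩
    exact Submodule.finiteDimensional_of_le hle
  · ext x
    have hπ₁T : π₁ ((T + P) x) = (T₁ + 1) (π₁ x) := by
      apply Subtype.ext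
      show P (T x + P x) = ((T₁ + 1) (π₁ x) : X)
      have : ((T₁ + 1) (π₁ x) : X) = T (P x) + P x := by
        simp [ContinuousLinearMap.add_apply, hT₁c, hπ₁c]
      rw [this, map_add, hTP, hPP]
    have hπ₂T : π₂ ((T + P) x) = T₂ (π₂ x) := by
      apply Subtype.ext
      show (T x + P x) - P (T x + P x) = ((T₂ (π₂ x) : X))
      rw [hT₂c, hπ₂c, map_sub, map_add, hTP, hPP]
      abel
    have e1 : S₁ ((T₁ + 1) (π₁ x)) = π₁ x + F₁ (π₁ x) := by
      have := DFunLike.congr_fun hS₁ (π₁ x)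
      simpa using this
    have e2 : S₂ (T₂ (π₂ x)) = π₂ x + F₂ (π₂ x) := by
      have := DFunLike.congr_fun hS₂ (π₂ x)
      simpa using this
    show X₁.subtypeL (S₁ (π₁ ((T + P) x))) + X₂.subtypeL (S₂ (π₂ ((T + P) x)))
        = x + (X₁.subtypeL (F₁ (π₁ x)) + X₂.subtypeL (F₂ (π₂ x)))
    rw [hπ₁T, hπ₂T, e1, e2]
    show ((π₁ x + F₁ (π₁ x) : X₁) : X) + ((π₂ x + F₂ (π₂ x) : X₂) : X)
        = x + (((F₁ (π₁ x) : X)) + ((F₂ (π₂ x) : X)))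
    push_cast
    rw [hπ₁c, hπ₂c]
    abel
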